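/- The map sending a Moore's-Nim_k position (finite multiset of pile sizes) to the sequence, indexed by bit-positions i, of (number of piles with i-th binary digit 1) mod k, is a monoid homomorphism from the free commutative monoid of positions onto a direct sum of copies of Z/kZ, and its kernel-class of 0 is exactly the set of P-positions of Moore's Nim_k. -/

import Mathlib

/-- A move in Moore's Nim with parameter `k`. -/
def MooreMove (k : ℕ) (s t : Multiset ℕ) : Prop :=
  ∃ r r' : Multiset ℕ, r ≤ s ∧ r ≠ 0 ∧ Multiset.card r ≤ k - 1 ∧
    Multiset.Rel (fun a b => b < a) r r' ∧ t = s - r + r'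

mutual
inductive MooreP (k : ℕ) : Multiset ℕ → Prop
  | mk (s : Multiset ℕ) : (∀ t, MooreMove k s t → MooreN k t) → MooreP k s

inductive MooreN (k : ℕ) : Multiset ℕ → Prop
  | mk (s t : Multiset ℕ) : MooreMove k s t → MooreP k t → MooreN k s
end

/-- The digit-count map of Moore's Nim_k: to a position it associates, for each
bit-position `i`, the number of piles with `i`-th binary digit `1`, mod `k`. -/
def mooreDigits (k : ℕ) (s : Multiset ℕ) : ℕ → ZMod k :=
  fun i => (Multiset.card (s.filter (fun a => Nat.testBit a i)) : ZMod k)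


open Multiset



def DD (s : Multiset ℕ) (i : ℕ) : ℕ := s.countP (fun a => Nat.testBit a i)

lemma DD_add (s t : Multiset ℕ) (i : ℕ) : DD (s + t) i = DD s i + DD t i :=
  countP_add _ _ _

lemma DD_le_card (s : Multiset ℕ) (i : ℕ) : DD s i ≤ Multiset.card s :=
  countP_le_card _ _

lemma DD_le_of_le {r s : Multiset ℕ} (h : r ≤ s) (i : ℕ) : DD r i ≤ DD s i :=
  countP_le_of_le _ h

lemma DD_sub {r s : Multiset ℕ} (h : r ≤ s) (i : ℕ) : DD (s - r) i = DD s i - DD r i :=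
  countP_sub h _

lemma nat_eq_sum_bits (N : ℕ) : ∀ a : ℕ, a < 2^N →
    a = ∑ i ∈ Finset.range N, 2^i * (if Nat.testBit a i then 1 else 0) := by
  induction N with
  | zero => intro a h; interval_cases a; simp
  | succ n ih =>
    intro a h
    rw [Finset.sum_range_succ']
    have h2 : a / 2 < 2^n := by
      have : (2:ℕ)^(n+1) = 2^n * 2 := by ring
      omega
    have e := ih (a/2) h2
    have : ∀ i ∈ Finset.range n, 2^(i+1) * (if Nat.testBit a (i+1) then 1 else 0)
        = 2 * (2^i * (if Nat.testBit (a/2) i then 1 else 0)) := by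
      intro i _
      rw [Nat.testBit_add_one]
      ring
    rw [Finset.sum_congr rfl this, ← Finset.mul_sum, ← e]
    simp only [Nat.testBit_zero, pow_zero, one_mul]
    rcases Nat.even_or_odd a with he | ho
    · have : a % 2 = 0 := Nat.even_iff.mp he
      simp [this]; omega
    · have : a % 2 = 1 := Nat.odd_iff.mp ho
      simp [this]; omega

lemma sum_eq_sum_DD (N : ℕ) (s : Multiset ℕ) (h : ∀ a ∈ s, a < 2^N) :
    s.sum = ∑ i ∈ Finset.range N, 2^i * DD s i := by
  induction s using Multiset.induction with
  | empty => simp [DD]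
  | cons a s ih =>
    have ha : a < 2^N := h a (mem_cons_self a s)
    rw [Multiset.sum_cons, ih (fun b hb => h b (mem_cons_of_mem hb))]
    have : ∀ i, DD (a ::ₘ s) i = DD s i + (if Nat.testBit a i then 1 else 0) := by
      intro i; simp [DD, countP_cons]
    simp only [this, Nat.mul_add, Finset.sum_add_distrib]
    conv_lhs => rw [nat_eq_sum_bits N a ha]
    ring

lemma rel_sum_le {r r' : Multiset ℕ} (h : Multiset.Rel (fun a b => b < a) r r') :
    r'.sum ≤ r.sum := by
  induction h with
  | zero => simp
  | @cons a b s t hab hst ih => simp only [Multiset.sum_cons]; omega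

lemma rel_sum_lt {r r' : Multiset ℕ} (h : Multiset.Rel (fun a b => b < a) r r')
    (hne : r ≠ 0) : r'.sum < r.sum := by
  induction h with
  | zero => simp at hne
  | @cons a b s t hab hst _ =>
    have := rel_sum_le hst
    simp only [Multiset.sum_cons]; omega

lemma exists_sub_card {α : Type*} (s : Multiset α) : ∀ n : ℕ, n ≤ Multiset.card s →
    ∃ t, t ≤ s ∧ Multiset.card t = n := by
  induction s using Multiset.induction with
  | empty => intro n h; simp at h; exact ⟨0, le_refl _, by simp [h]⟩
  | cons a s ih =>
    intro n h
    rcases n with _ | m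
    · exact ⟨0, Multiset.zero_le _, rfl⟩
    · have : m ≤ Multiset.card s := by simp at h; omega
      obtain ⟨t, ht, hc⟩ := ih m this
      exact ⟨a ::ₘ t, cons_le_cons a ht, by simp [hc]⟩




lemma bit_mul_pow_high (m i c : ℕ) (h : i ≤ c) :
    Nat.testBit (m * 2^i) c = Nat.testBit m (c - i) := by
  rw [mul_comm, Nat.testBit_two_pow_mul]
  simp [h]

lemma bit_mul_pow_low (m i c : ℕ) (h : c < i) : Nat.testBit (m * 2^i) c = false := by
  rw [mul_comm, Nat.testBit_two_pow_mul]
  simp [Nat.not_le.mpr h]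

lemma bit_div_pow (a n j : ℕ) : Nat.testBit (a / 2^n) j = Nat.testBit a (n + j) := by
  rw [← Nat.shiftRight_eq_div_pow, Nat.testBit_shiftRight]

lemma bit_even_self (m i : ℕ) : Nat.testBit ((2*m) * 2^i) i = false := by
  rw [bit_mul_pow_high _ i i (le_refl i), Nat.sub_self, Nat.testBit_zero]
  simp [Nat.mul_mod_right]

lemma bit_odd_self (m i : ℕ) : Nat.testBit ((2*m+1) * 2^i) i = true := by
  rw [bit_mul_pow_high _ i i (le_refl i), Nat.sub_self, Nat.testBit_zero]
  simp [Nat.add_mul_mod_self_left, Nat.mul_add_mod]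

lemma bit_high_eq (m b i c : ℕ) (h : i + 1 ≤ c) (hb : b ≤ 1) :
    Nat.testBit ((2*m+b) * 2^i) c = Nat.testBit m (c - (i+1)) := by
  rw [bit_mul_pow_high _ i c (by omega)]
  have : c - i = (c - (i+1)) + 1 := by omega
  rw [this, Nat.testBit_add_one]
  congr 1
  omega

lemma DD_map {α : Type*} (f : α → ℕ) (p : Multiset α) (i : ℕ) :
    DD (p.map f) i = p.countP (fun q => Nat.testBit (f q) i) := by
  rw [DD, countP_map, countP_eq_card_filter]








lemma move_sum_lt {k : ℕ} {s t : Multiset ℕ} (hm : MooreMove k s t) : t.sum < s.sum := by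
  obtain ⟨r, r', hrs, hrne, _, hrel, hteq⟩ := hm
  have h1 : (s - r) + r = s := tsub_add_cancel_of_le hrs
  have h2 : r'.sum < r.sum := rel_sum_lt hrel hrne
  have h3 := congrArg Multiset.sum h1
  rw [Multiset.sum_add] at h3
  rw [hteq, Multiset.sum_add]
  omega

lemma no_zero_to_zero {k : ℕ} (hk : 2 ≤ k) {s t : Multiset ℕ} (hm : MooreMove k s t)
    (hs : ∀ i, ((DD s i : ℕ) : ZMod k) = 0) (ht : ∀ i, ((DD t i : ℕ) : ZMod k) = 0) :
    False := by
  obtain ⟨r, r', hrs, hrne, hcard, hrel, hteq⟩ := hm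
  haveI : NeZero k := ⟨by omega⟩
  have hcard' : Multiset.card r' = Multiset.card r := (card_eq_card_of_rel hrel).symm
  have key : ∀ i, DD r i = DD r' i := by
    intro i
    have h1 : DD t i = (DD s i - DD r i) + DD r' i := by
      rw [hteq, DD_add, DD_sub hrs]
    have h2 : DD r i ≤ DD s i := DD_le_of_le hrs i
    have e := ht i
    rw [h1, Nat.cast_add, Nat.cast_sub h2, hs i] at e
    have ecast : ((DD r i : ℕ) : ZMod k) = ((DD r' i : ℕ) : ZMod k) := by
      linear_combination -e
    have hr : DD r i < k := lt_of_le_of_lt (le_trans (DD_le_card r i) hcard) (by omega)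
    have hr' : DD r' i < k := by
      have := le_trans (DD_le_card r' i) (le_of_eq hcard')
      omega
    have := congrArg ZMod.val ecast
    rwa [ZMod.val_cast_of_lt hr, ZMod.val_cast_of_lt hr'] at this
  set N := r.sum + r'.sum with hN
  have hb : ∀ a ∈ r, a < 2^N := by
    intro a ha
    have h1 : a ≤ r.sum := Multiset.single_le_sum (fun x _ => Nat.zero_le x) a ha
    exact lt_of_lt_of_le (Nat.lt_two_pow_self (n := a)) (Nat.pow_le_pow_right (by norm_num) (by omega))
  have hb' : ∀ a ∈ r', a < 2^N := by
    intro a ha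
    have h1 : a ≤ r'.sum := Multiset.single_le_sum (fun x _ => Nat.zero_le x) a ha
    exact lt_of_lt_of_le (Nat.lt_two_pow_self (n := a)) (Nat.pow_le_pow_right (by norm_num) (by omega))
  have e1 : r.sum = r'.sum := by
    rw [sum_eq_sum_DD N r hb, sum_eq_sum_DD N r' hb']
    exact Finset.sum_congr rfl (fun i _ => by rw [key i])
  have := rel_sum_lt hrel hrne
  omega






lemma pow_succ_two (i : ℕ) : (2:ℕ)^(i+1) = 2^i * 2 := by ring

lemma construct (k : ℕ) (hk : 2 ≤ k) :
    ∀ (i : ℕ) (u : Multiset ℕ) (p : Multiset (ℕ × ℕ)),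
    Multiset.card p ≤ k - 1 →
    (∀ q ∈ p, ∃ m : ℕ, q.2 = m * 2^i ∧ m < q.1 / 2^i) →
    (∀ c, i ≤ c → ((DD (u + p.map Prod.snd) c : ℕ) : ZMod k) = 0) →
    ∃ (p' : Multiset (ℕ × ℕ)) (w v : Multiset ℕ),
      u = w + v ∧ p'.map Prod.fst = p.map Prod.fst + w ∧
      Multiset.card p' ≤ k - 1 ∧ (∀ q ∈ p', q.2 < q.1) ∧
      (∀ c, ((DD (v + p'.map Prod.snd) c : ℕ) : ZMod k) = 0) := by
  intro i
  induction i with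
  | zero =>
    intro u p hcard hpair hdig
    refine ⟨p, 0, u, by simp, by simp, hcard, ?_, fun c => hdig c (Nat.zero_le c)⟩
    intro q hq
    obtain ⟨m, hm1, hm2⟩ := hpair q hq
    simp only [pow_zero, mul_one, Nat.div_one] at hm1 hm2
    omega
  | succ i ih =>
    intro u p hcard hpair hdig
    by_cases hcase : (k - DD u i % k) % k ≤ Multiset.card p
    · -- Case A: enough already-selected piles to fix column i
      obtain ⟨p₁, hp₁le, hp₁card⟩ := exists_sub_card p _ hcase
      set p₂ := p - p₁ with hp₂
      have hp : p₂ + p₁ = p := tsub_add_cancel_of_le hp₁le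
      set f : ℕ × ℕ → ℕ × ℕ := fun q => (q.1, q.2 + 2^i) with hf
      set ph := p₂ + p₁.map f with hph
      have hmem₂ : ∀ q ∈ p₂, q ∈ p := fun q hq => mem_of_le (tsub_le_self) hq
      have hmem₁ : ∀ q ∈ p₁, q ∈ p := fun q hq => mem_of_le hp₁le hq
      have hcard' : Multiset.card ph = Multiset.card p := by
        have := congrArg Multiset.card hp
        simp only [card_add] at this
        simp [hph, card_add, card_map]
        omega
      have hpair' : ∀ q ∈ ph, ∃ m : ℕ, q.2 = m * 2^i ∧ m < q.1 / 2^i := by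
        intro q hq
        rw [hph, mem_add] at hq
        rcases hq with hq | hq
        · obtain ⟨m, hm1, hm2⟩ := hpair q (hmem₂ q hq)
          refine ⟨2*m, by rw [hm1, pow_succ_two]; ring, ?_⟩
          rw [pow_succ_two, ← Nat.div_div_eq_div_mul] at hm2
          omega
        · rw [mem_map] at hq
          obtain ⟨q₀, hq₀, rfl⟩ := hq
          obtain ⟨m, hm1, hm2⟩ := hpair q₀ (hmem₁ q₀ hq₀)
          refine ⟨2*m+1, by simp [hf, hm1, pow_succ_two]; ring, ?_⟩
          simp only [hf]
          rw [pow_succ_two, ← Nat.div_div_eq_div_mul] at hm2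
          omega
      have hdig' : ∀ c, i ≤ c → ((DD (u + ph.map Prod.snd) c : ℕ) : ZMod k) = 0 := by
        intro c hc
        have hsplit : DD (u + ph.map Prod.snd) c
            = DD u c + DD (p₂.map Prod.snd) c + DD (p₁.map (fun q => q.2 + 2^i)) c := by
          rw [hph, Multiset.map_add, Multiset.map_map, DD_add, DD_add]
          have e : (Prod.snd ∘ f) = fun q => q.2 + 2^i := by funext q; rfl
          rw [e]; ring
        by_cases hci : c = i
        · -- column c = i
          subst hci
          have h2 : DD (p₂.map Prod.snd) c = 0 := by
            rw [DD_map, countP_eq_zero]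
            intro q hq
            obtain ⟨m, hm1, _⟩ := hpair q (hmem₂ q hq)
            rw [hm1, pow_succ_two, show m * (2^c*2) = (2*m) * 2^c by ring]
            simp [bit_even_self]
          have h1 : DD (p₁.map (fun q => q.2 + 2^c)) c = Multiset.card p₁ := by
            rw [DD_map, countP_eq_card]
            intro q hq
            obtain ⟨m, hm1, _⟩ := hpair q (hmem₁ q hq)
            rw [hm1, pow_succ_two, show m * (2^c*2) + 2^c = (2*m+1) * 2^c by ring]
            simp [bit_odd_self]
          rw [hsplit, h1, h2, hp₁card]
          push_cast
          rw [ZMod.natCast_mod, Nat.cast_sub (le_of_lt (Nat.mod_lt _ (by omega))),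
            ZMod.natCast_self, ZMod.natCast_mod]
          ring
        · -- column c > i
          have hlt : i + 1 ≤ c := by omega
          have h1 : DD (p₁.map (fun q => q.2 + 2^i)) c = DD (p₁.map Prod.snd) c := by
            rw [DD_map, DD_map]
            apply countP_congr rfl
            intro q hq
            obtain ⟨m, hm1, _⟩ := hpair q (hmem₁ q hq)
            have e1 : Nat.testBit (q.2 + 2^i) c = Nat.testBit m (c - (i+1)) := by
              rw [hm1, pow_succ_two, show m * (2^i*2) + 2^i = (2*m+1) * 2^i by ring,
                bit_high_eq m 1 i c (by omega) (by omega)]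
            have e2 : Nat.testBit q.2 c = Nat.testBit m (c - (i+1)) := by
              rw [hm1, pow_succ_two, show m * (2^i*2) = (2*m+0) * 2^i by ring,
                bit_high_eq m 0 i c (by omega) (by omega)]
            rw [e1, e2]
          rw [hsplit, h1]
          have : DD u c + DD (p₂.map Prod.snd) c + DD (p₁.map Prod.snd) c
              = DD (u + p.map Prod.snd) c := by
            rw [← hp, Multiset.map_add, DD_add, DD_add]
            ring
          rw [this]
          exact hdig c (by omega)
      obtain ⟨p', w, v, h1, h2, h3, h4, h5⟩ :=
        ih u ph (by omega) hpair' hdig'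
      refine ⟨p', w, v, h1, ?_, h3, h4, h5⟩
      rw [h2, hph, Multiset.map_add, Multiset.map_map]
      have e : (Prod.fst ∘ f) = Prod.fst := by funext q; rfl
      rw [e, ← Multiset.map_add, hp]
    · -- Case B: select new piles from u
      push_neg at hcase
      set cu := DD u i with hcu
      have hmodne : cu % k ≠ 0 := by
        intro h
        rw [h, Nat.sub_zero, Nat.mod_self] at hcase
        omega
      set g := cu % k with hg
      have hρ : (k - cu % k) % k = k - g := Nat.mod_eq_of_lt (by omega)
      rw [hρ] at hcase
      have hkg : Multiset.card p + g ≤ k - 1 := by omega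
      have hgcu : g ≤ cu := Nat.mod_le _ _
      have hgle : g ≤ Multiset.card (u.filter (fun a => Nat.testBit a i)) := by
        rw [← countP_eq_card_filter]
        exact le_trans hgcu (le_refl _)
      obtain ⟨w₁, hw₁le, hw₁card⟩ := exists_sub_card _ g hgle
      have hw₁u : w₁ ≤ u := le_trans hw₁le (filter_le _ u)
      have hw₁bit : ∀ a ∈ w₁, Nat.testBit a i = true := by
        intro a ha
        have h := Multiset.mem_of_le hw₁le ha
        rw [Multiset.mem_filter] at h
        exact h.2
      set tr : ℕ → ℕ × ℕ := fun a => (a, a / 2^(i+1) * 2^(i+1)) with htr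
      set ph := p + w₁.map tr with hph
      have hcard' : Multiset.card ph ≤ k - 1 := by
        rw [hph, card_add, card_map, hw₁card]
        omega
      have hpair' : ∀ q ∈ ph, ∃ m : ℕ, q.2 = m * 2^i ∧ m < q.1 / 2^i := by
        intro q hq
        rw [hph, mem_add] at hq
        rcases hq with hq | hq
        · obtain ⟨m, hm1, hm2⟩ := hpair q hq
          refine ⟨2*m, by rw [hm1, pow_succ_two]; ring, ?_⟩
          rw [pow_succ_two, ← Nat.div_div_eq_div_mul] at hm2
          omega
        · rw [mem_map] at hq
          obtain ⟨a, ha, rfl⟩ := hq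
          have hb := hw₁bit a ha
          rw [Nat.testBit_eq_decide_div_mod_eq, decide_eq_true_eq] at hb
          refine ⟨a / 2^(i+1) * 2, ?_, ?_⟩
          · simp only [htr]
            rw [pow_succ_two]
            ring
          · simp only [htr]
            rw [pow_succ_two, ← Nat.div_div_eq_div_mul]
            omega
      have hdig' : ∀ c, i ≤ c →
          ((DD ((u - w₁) + ph.map Prod.snd) c : ℕ) : ZMod k) = 0 := by
        intro c hc
        have hwle : DD w₁ c ≤ DD u c := DD_le_of_le hw₁u c
        have hsplit : DD ((u - w₁) + ph.map Prod.snd) c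
            = (DD u c - DD w₁ c) + (DD (p.map Prod.snd) c
              + DD (w₁.map (fun a => a / 2^(i+1) * 2^(i+1))) c) := by
          rw [hph, Multiset.map_add, Multiset.map_map, DD_add, DD_add, DD_sub hw₁u]
          have e : (Prod.snd ∘ tr) = fun a => a / 2^(i+1) * 2^(i+1) := by funext a; rfl
          rw [e]
        by_cases hci : c = i
        · -- column c = i
          subst hci
          have h1 : DD w₁ c = g := by
            rw [DD, countP_eq_card.2 hw₁bit, hw₁card]
          have h2 : DD (p.map Prod.snd) c = 0 := by
            rw [DD_map, countP_eq_zero]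
            intro q hq
            obtain ⟨m, hm1, _⟩ := hpair q hq
            rw [hm1, pow_succ_two, show m * (2^c*2) = (2*m) * 2^c by ring]
            simp [bit_even_self]
          have h3 : DD (w₁.map (fun a => a / 2^(c+1) * 2^(c+1))) c = 0 := by
            rw [DD_map, countP_eq_zero]
            intro a _
            rw [bit_mul_pow_low _ _ _ (by omega)]
            simp
          rw [hsplit, h1, h2, h3]
          have e2 : DD u c - g + (0 + 0) = k * (cu / k) := by
            have := Nat.div_add_mod cu k
            omega
          rw [e2]
          push_cast
          rw [ZMod.natCast_self]
          ring
        · -- column c > i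
          have hlt : i + 1 ≤ c := by omega
          have h1 : DD (w₁.map (fun a => a / 2^(i+1) * 2^(i+1))) c = DD w₁ c := by
            rw [DD_map, DD]
            apply countP_congr rfl
            intro a _
            rw [bit_mul_pow_high _ _ _ (by omega), bit_div_pow,
              show i + 1 + (c - (i+1)) = c by omega]
          rw [hsplit, h1, show (DD u c - DD w₁ c) + (DD (p.map Prod.snd) c + DD w₁ c)
            = DD u c + DD (p.map Prod.snd) c by omega, ← DD_add]
          exact hdig c (by omega)
      obtain ⟨p', w', v, h1, h2, h3, h4, h5⟩ :=
        ih (u - w₁) ph hcard' hpair' hdig'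
      refine ⟨p', w₁ + w', v, ?_, ?_, h3, h4, h5⟩
      · have := tsub_add_cancel_of_le hw₁u
        calc u = (u - w₁) + w₁ := this.symm
        _ = (w' + v) + w₁ := by rw [h1]
        _ = (w₁ + w') + v := by rw [add_comm, ← add_assoc]
      · rw [h2, hph, Multiset.map_add, Multiset.map_map]
        have e : (Prod.fst ∘ tr) = id := by funext a; rfl
        rw [e, Multiset.map_id, ← add_assoc]











lemma exists_good_move {k : ℕ} (hk : 2 ≤ k) {s : Multiset ℕ}
    (hs : ¬ ∀ i, ((DD s i : ℕ) : ZMod k) = 0) :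
    ∃ t, MooreMove k s t ∧ ∀ i, ((DD t i : ℕ) : ZMod k) = 0 := by
  set N := s.sum with hN
  have hdig : ∀ c, N ≤ c → ((DD (s + (0 : Multiset (ℕ × ℕ)).map Prod.snd) c : ℕ) : ZMod k) = 0 := by
    intro c hc
    have : DD (s + (0 : Multiset (ℕ × ℕ)).map Prod.snd) c = 0 := by
      rw [Multiset.map_zero, add_zero, DD, countP_eq_zero]
      intro a ha
      have h1 : a ≤ N := Multiset.single_le_sum (fun x _ => Nat.zero_le x) a ha
      have h2 : a < 2^c := lt_of_le_of_lt (le_trans h1 hc) (Nat.lt_two_pow_self (n := c))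
      simp [Nat.testBit_lt_two_pow h2]
    rw [this]
    simp
  obtain ⟨p', w, v, h1, h2, h3, h4, h5⟩ :=
    construct k hk N s 0 (by simp) (by simp) hdig
  rw [Multiset.map_zero, zero_add] at h2
  refine ⟨v + p'.map Prod.snd, ⟨p'.map Prod.fst, p'.map Prod.snd, ?_, ?_, ?_, ?_, ?_⟩, h5⟩
  · rw [h2, h1]; exact le_add_right _ _
  · intro h0
    have hp0 : p' = 0 := by
      have := congrArg Multiset.card h0
      simpa using this
    apply hs
    intro i
    have := h5 i
    rw [hp0] at this
    simp only [Multiset.map_zero, add_zero] at this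
    have hw : w = 0 := by
      rw [hp0] at h2
      simpa using h2.symm
    have hv : v = s := by
      rw [hw, zero_add] at h1
      exact h1.symm
    rwa [hv] at this
  · rw [card_map]; exact h3
  · rw [rel_map]
    exact rel_refl_of_refl_on (fun q hq => h4 q hq)
  · rw [h2, h1, add_tsub_cancel_left]

lemma dichotomy (k : ℕ) (hk : 2 ≤ k) : ∀ n : ℕ, ∀ s : Multiset ℕ, s.sum = n →
    ((∀ i, ((DD s i : ℕ) : ZMod k) = 0) → MooreP k s) ∧
    ((¬ ∀ i, ((DD s i : ℕ) : ZMod k) = 0) → MooreN k s) := by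
  intro n
  induction n using Nat.strong_induction_on with
  | _ n ih =>
    intro s hs
    constructor
    · intro h0
      refine MooreP.mk s ?_
      intro t hmove
      have hlt : t.sum < n := hs ▸ move_sum_lt hmove
      have ht0 : ¬ ∀ i, ((DD t i : ℕ) : ZMod k) = 0 :=
        fun h => no_zero_to_zero hk hmove h0 h
      exact (ih t.sum hlt t rfl).2 ht0
    · intro h0
      obtain ⟨t, hmove, ht⟩ := exists_good_move hk h0
      exact MooreN.mk s t hmove ((ih t.sum (hs ▸ move_sum_lt hmove) t rfl).1 ht)

lemma not_both (k : ℕ) : ∀ n : ℕ, ∀ s : Multiset ℕ, s.sum = n →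
    MooreP k s → MooreN k s → False := by
  intro n
  induction n using Nat.strong_induction_on with
  | _ n ih =>
    intro s hs hP hN
    cases hN with
    | mk s t hmove hPt =>
      cases hP with
      | mk _ h => exact ih t.sum (hs ▸ move_sum_lt hmove) t rfl hPt (h t hmove)


lemma countP_replicate {α : Type*} (p : α → Prop) [DecidablePred p] (n : ℕ) (a : α) :
    countP p (replicate n a) = if p a then n else 0 := by
  induction n with
  | zero => simp
  | succ n ih =>
    rw [replicate_succ, countP_cons, ih]
    by_cases h : p a <;> simp [h]

/-- The map `mooreDigits k` is a monoid homomorphism from the free commutative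
monoid of positions onto the direct sum of copies of `ℤ/kℤ` (the finitely
supported functions `ℕ →₀ ZMod k`), and (for `k ≥ 2`) its kernel-class of `0`
is exactly the set of P-positions of Moore's Nim_k. -/
theorem stmt8 (k : ℕ) (hk : 2 ≤ k) :
    (∀ s t : Multiset ℕ, ∀ i : ℕ,
      mooreDigits k (s + t) i = mooreDigits k s i + mooreDigits k t i) ∧
    (∀ g : ℕ →₀ ZMod k, ∃ s : Multiset ℕ, ∀ i : ℕ, mooreDigits k s i = g i) ∧
    (∀ s : Multiset ℕ, mooreDigits k s = 0 ↔ MooreP k s) := by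
  haveI : NeZero k := ⟨by omega⟩
  have hmd : ∀ s : Multiset ℕ, ∀ i, mooreDigits k s i = ((DD s i : ℕ) : ZMod k) := by
    intro s i
    rw [mooreDigits, DD, countP_eq_card_filter]
  refine ⟨?_, ?_, ?_⟩
  · intro s t i
    rw [hmd, hmd, hmd, DD, DD, DD, countP_add]
    push_cast
    ring
  · intro g
    refine ⟨∑ i ∈ g.support, replicate ((g i).val) (2^i), ?_⟩
    intro c
    rw [hmd]
    have : DD (∑ i ∈ g.support, replicate ((g i).val) (2^i)) c
        = ∑ i ∈ g.support, DD (replicate ((g i).val) (2^i)) c := by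
      rw [DD, ← coe_countPAddMonoidHom, map_sum]
      rfl
    rw [this]
    have e : ∀ i ∈ g.support, DD (replicate ((g i).val) (2^i)) c
        = if i = c then (g i).val else 0 := by
      intro i _
      rw [DD, countP_replicate]
      by_cases h : i = c
      · simp [h, Nat.testBit_two_pow_self]
      · simp [h, Nat.testBit_two_pow_of_ne h]
    rw [Finset.sum_congr rfl e, Finset.sum_ite_eq' g.support c (fun i => (g i).val)]
    by_cases hc : c ∈ g.support
    · simp only [hc, if_true]
      exact ZMod.natCast_rightInverse (g c)
    · simp only [hc, if_false]
      rw [Finsupp.notMem_support_iff] at hc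
      simp [hc]
  · intro s
    have hiff : mooreDigits k s = 0 ↔ ∀ i, ((DD s i : ℕ) : ZMod k) = 0 := by
      rw [funext_iff]
      constructor
      · intro h i; rw [← hmd]; exact h i
      · intro h i; rw [hmd]; exact h i
    rw [hiff]
    constructor
    · intro h0
      exact (dichotomy k hk s.sum s rfl).1 h0
    · intro hP
      by_contra h0
      exact not_both k s.sum s rfl hP ((dichotomy k hk s.sum s rfl).2 h0)
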